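/- arXiv:2511.22281 — 2 statements merged into one kernel-verified Lean document; each statement's English description precedes it below -/
import Mathlib

section
/- Let f : S → ℝ be a monotone submodular set function on subsets of a finite ground set V with f(∅) = 0, and let k ≥ 1. If G_k is the value achieved by the greedy algorithm after k steps (at each step adding the element with maximal marginal gain), and OPT_k is the maximum of f over subsets of size at most k, then G_k ≥ (1 - (1 - 1/k)^k)·OPT_k ≥ (1 - 1/e)·OPT_k. -/
/-- Nemhauser–Wolsey–Fisher: greedy maximization of a monotone submodular function `f` with
`f ∅ = 0` achieves, after `k` steps, at least `(1-(1-1/k)^k) ≥ (1-1/e)` times the optimum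
over sets of size at most `k`. -/
theorem greedy_submodular_guarantee {V : Type*} [Fintype V] [DecidableEq V]
    (f : Finset V → ℝ)
    (hmono : ∀ A B : Finset V, A ⊆ B → f A ≤ f B)
    (hsub : ∀ A B : Finset V, A ⊆ B → ∀ x ∉ B,
      f (insert x B) - f B ≤ f (insert x A) - f A)
    (hempty : f ∅ = 0)
    (k : ℕ) (hk : 1 ≤ k)
    (S : ℕ → Finset V) (hS0 : S 0 = ∅)
    (hgreedy : ∀ i, ∃ x, S (i + 1) = insert x (S i) ∧
      ∀ y, f (insert y (S i)) ≤ f (insert x (S i)))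
    (T : Finset V) (hT : T.card ≤ k) :
    (1 - (1 - 1 / (k:ℝ)) ^ k) * f T ≤ f (S k) ∧
      (1 - (Real.exp 1)⁻¹) * f T ≤ (1 - (1 - 1 / (k:ℝ)) ^ k) * f T := by
  have hfT0 : 0 ≤ f T := hempty ▸ hmono ∅ T (Finset.empty_subset T)
  have hkpos : (0:ℝ) < k := by exact_mod_cast hk
  have hr : (0:ℝ) ≤ 1 - 1 / k := by
    rw [sub_nonneg, div_le_one hkpos]; exact_mod_cast hk
  -- submodularity: sum of marginals bounds the union
  have sumlem : ∀ (A D : Finset V),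
      f (A ∪ D) ≤ f A + ∑ x ∈ D, (f (insert x A) - f A) := by
    intro A D
    induction D using Finset.induction_on with
    | empty => simp
    | @insert x D hx ih =>
      rw [Finset.sum_insert hx]
      have hmarg : 0 ≤ f (insert x A) - f A :=
        sub_nonneg.2 (hmono _ _ (Finset.subset_insert _ _))
      by_cases hxAD : x ∈ A ∪ D
      · have : A ∪ insert x D = A ∪ D := by
          rw [Finset.union_insert, Finset.insert_eq_self.2 hxAD]
        rw [this]; linarith
      · have h1 : f (insert x (A ∪ D)) - f (A ∪ D) ≤ f (insert x A) - f A :=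
          hsub A (A ∪ D) Finset.subset_union_left x hxAD
        have : A ∪ insert x D = insert x (A ∪ D) := by
          rw [Finset.union_insert]
        rw [this]; linarith
  -- key induction
  have key : ∀ i, f T - f (S i) ≤ (1 - 1 / (k:ℝ)) ^ i * f T := by
    intro i
    induction i with
    | zero => simp [hS0, hempty]
    | succ i ih =>
      obtain ⟨x, hSx, hmax⟩ := hgreedy i
      have hg0 : 0 ≤ f (S (i + 1)) - f (S i) := by
        rw [hSx]; exact sub_nonneg.2 (hmono _ _ (Finset.subset_insert _ _))
      have hbound : f T - f (S i) ≤ (k:ℝ) * (f (S (i + 1)) - f (S i)) := by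
        have h1 : f T ≤ f (S i ∪ T) := hmono _ _ Finset.subset_union_right
        have h2 := sumlem (S i) T
        have h3 : ∑ y ∈ T, (f (insert y (S i)) - f (S i)) ≤
            (T.card : ℝ) * (f (S (i + 1)) - f (S i)) := by
          calc ∑ y ∈ T, (f (insert y (S i)) - f (S i))
              ≤ ∑ _y ∈ T, (f (S (i + 1)) - f (S i)) := by
                refine Finset.sum_le_sum fun y _ => ?_
                rw [hSx]; exact sub_le_sub_right (hmax y) _
            _ = (T.card : ℝ) * (f (S (i + 1)) - f (S i)) := by
                rw [Finset.sum_const, nsmul_eq_mul]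
        have h4 : (T.card : ℝ) * (f (S (i + 1)) - f (S i)) ≤
            (k:ℝ) * (f (S (i + 1)) - f (S i)) :=
          mul_le_mul_of_nonneg_right (by exact_mod_cast hT) hg0
        linarith
      have hdiv : (f T - f (S i)) / k ≤ f (S (i + 1)) - f (S i) :=
        (div_le_iff₀ hkpos).2 (by linarith)
      have hstep : f T - f (S (i + 1)) ≤ (1 - 1 / (k:ℝ)) * (f T - f (S i)) := by
        have hexp : (1 - 1 / (k:ℝ)) * (f T - f (S i)) =
            (f T - f (S i)) - (f T - f (S i)) / k := by ring
        linarith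
      calc f T - f (S (i + 1)) ≤ (1 - 1 / (k:ℝ)) * (f T - f (S i)) := hstep
        _ ≤ (1 - 1 / (k:ℝ)) * ((1 - 1 / (k:ℝ)) ^ i * f T) :=
            mul_le_mul_of_nonneg_left ih hr
        _ = (1 - 1 / (k:ℝ)) ^ (i + 1) * f T := by ring
  constructor
  · have := key k
    have hexp : (1 - (1 - 1 / (k:ℝ)) ^ k) * f T =
        f T - (1 - 1 / (k:ℝ)) ^ k * f T := by ring
    linarith
  · have h1 : 1 - 1 / (k:ℝ) ≤ Real.exp (-(1 / k)) := by
      have := Real.add_one_le_exp (-(1 / (k:ℝ))); linarith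
    have h2 : (1 - 1 / (k:ℝ)) ^ k ≤ (Real.exp (-(1 / (k:ℝ)))) ^ k :=
      pow_le_pow_left₀ hr h1 k
    have h3 : (Real.exp (-(1 / (k:ℝ)))) ^ k = Real.exp (-1) := by
      rw [← Real.exp_nat_mul]
      congr 1
      field_simp
    have h4 : (1 - 1 / (k:ℝ)) ^ k ≤ (Real.exp 1)⁻¹ := by
      rw [← Real.exp_neg]; rw [h3] at h2; exact h2
    exact mul_le_mul_of_nonneg_right (by linarith) hfT0
end

section
/- Let P, Q be column-stochastic matrices of the same size and c ∈ (0,1), with PageRank vectors r_P and r_Q solving r = (1-c)β + cPr and r = (1-c)β + cQr respectively for the same probability vector β. Then ‖r_P - r_Q‖₁ ≤ (c/(1-c))·‖(P - Q) r_Q‖₁. -/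
lemma stoch_contract (N : ℕ) (P : Matrix (Fin N) (Fin N) ℝ)
    (hP_nonneg : ∀ i j, 0 ≤ P i j) (hP_col : ∀ j, ∑ i, P i j = 1)
    (x : Fin N → ℝ) : ∑ i, |P.mulVec x i| ≤ ∑ j, |x j| := by
  simp only [Matrix.mulVec, dotProduct]
  calc ∑ i, |∑ j, P i j * x j| ≤ ∑ i, ∑ j, P i j * |x j| := by
        apply Finset.sum_le_sum
        intro i _
        calc |∑ j, P i j * x j| ≤ ∑ j, |P i j * x j| := Finset.abs_sum_le_sum_abs _ _
          _ = ∑ j, P i j * |x j| := by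
            apply Finset.sum_congr rfl
            intro j _
            rw [abs_mul, abs_of_nonneg (hP_nonneg i j)]
    _ = ∑ j, (∑ i, P i j) * |x j| := by
        rw [Finset.sum_comm]
        simp [Finset.sum_mul]
    _ = ∑ j, |x j| := by simp [hP_col]

/-- Perturbation stability of PageRank: if `r_P` and `r_Q` are fixed points for
column-stochastic `P` and `Q` with the same teleport vector `β`, then
`‖r_P - r_Q‖₁ ≤ (c/(1-c)) ‖(P - Q) r_Q‖₁`. -/
theorem pagerank_perturbation (N : ℕ) (P Q : Matrix (Fin N) (Fin N) ℝ) (c : ℝ)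
    (hc : c ∈ Set.Ioo (0:ℝ) 1)
    (hP_nonneg : ∀ i j, 0 ≤ P i j) (hP_col : ∀ j, ∑ i, P i j = 1)
    (hQ_nonneg : ∀ i j, 0 ≤ Q i j) (hQ_col : ∀ j, ∑ i, Q i j = 1)
    (β : Fin N → ℝ) (hβ_nonneg : ∀ j, 0 ≤ β j) (hβ_sum : ∑ j, β j = 1)
    (rP rQ : Fin N → ℝ)
    (hrP : rP = (1 - c) • β + (c • P).mulVec rP)
    (hrQ : rQ = (1 - c) • β + (c • Q).mulVec rQ) :
    ∑ i, |rP i - rQ i| ≤ (c / (1 - c)) * ∑ i, |(P - Q).mulVec rQ i| := by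
  obtain ⟨hc0, hc1⟩ := hc
  have h1c : (0:ℝ) < 1 - c := by linarith
  set d : Fin N → ℝ := rP - rQ with hd
  have key : ∀ i, d i = c * (P.mulVec d i) + c * ((P - Q).mulVec rQ i) := by
    intro i
    have e1 := congrFun hrP i
    have e2 := congrFun hrQ i
    simp only [Pi.add_apply, Pi.smul_apply, Matrix.mulVec, dotProduct,
      Matrix.smul_apply, Matrix.sub_apply, smul_eq_mul, hd, Pi.sub_apply] at e1 e2 ⊢
    rw [e1, e2]
    ring_nf
    rw [Finset.mul_sum, Finset.mul_sum, ← Finset.sum_add_distrib, ← Finset.sum_sub_distrib]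
    apply Finset.sum_congr rfl
    intro j _
    ring
  have hsum : ∑ i, |d i| ≤ c * (∑ i, |d i|) + c * ∑ i, |(P - Q).mulVec rQ i| := by
    calc ∑ i, |d i| ≤ ∑ i, (c * |P.mulVec d i| + c * |(P - Q).mulVec rQ i|) := by
          apply Finset.sum_le_sum
          intro i _
          rw [key i]
          calc |c * P.mulVec d i + c * (P - Q).mulVec rQ i|
              ≤ |c * P.mulVec d i| + |c * (P - Q).mulVec rQ i| := abs_add_le _ _
            _ = c * |P.mulVec d i| + c * |(P - Q).mulVec rQ i| := by
                rw [abs_mul, abs_mul, abs_of_pos hc0]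
      _ = c * (∑ i, |P.mulVec d i|) + c * ∑ i, |(P - Q).mulVec rQ i| := by
          rw [Finset.sum_add_distrib, ← Finset.mul_sum, ← Finset.mul_sum]
      _ ≤ c * (∑ i, |d i|) + c * ∑ i, |(P - Q).mulVec rQ i| := by
          have := stoch_contract N P hP_nonneg hP_col d
          nlinarith
  have hds : ∀ i, |rP i - rQ i| = |d i| := fun i => by simp [hd]
  simp only [hds]
  rw [div_mul_eq_mul_div, le_div_iff₀ h1c]
  nlinarith [hsum]
end
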